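/- arXiv:2110.03454 — 3 statements merged into one kernel-verified Lean document; each statement's English description precedes it below -/
import Mathlib

section
/- With G as in the collection, ∫₀^∞ (1 - G(t)) dt = ρ/λ. That is, the mean of the distribution equals α = ρ/λ. -/
open Real MeasureTheory

theorem stmt2 (lam ρ p β : ℝ) (hlam : 0 < lam) (hρ : 0 < ρ)
    (hp0 : 0 ≤ p) (hp1 : p < 1) (hβ : -lam < β)
    (hβ' : β ≤ lam * (1 - p * exp ρ) / (exp ρ - 1))
    (c : ℝ) (hc : c = lam + (lam * p + β) / (1 - p))
    (G : ℝ → ℝ)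
    (hG : ∀ t, G t = 1 - ((1 - exp (-ρ)) * c) / (lam * exp (-ρ) * (exp (c * t) - 1) + lam)) :
    ∫ t in Set.Ioi (0 : ℝ), (1 - G t) = ρ / lam := by
  have h1p : (0:ℝ) < 1 - p := by linarith
  have hc0 : 0 < c := by
    rw [hc]
    have h : -lam < (lam * p + β) / (1 - p) := by
      rw [lt_div_iff₀ h1p]; nlinarith
    linarith
  set a := lam * Real.exp (-ρ) with ha_def
  set b := lam * (1 - Real.exp (-ρ)) with hb_def
  have hexp1 : Real.exp (-ρ) < 1 := by
    rw [Real.exp_lt_one_iff]; linarith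
  have hexp0 : 0 < Real.exp (-ρ) := Real.exp_pos _
  have ha : 0 < a := by positivity
  have hb : 0 < b := mul_pos hlam (by linarith)
  have hab : a + b = lam := by rw [ha_def, hb_def]; ring
  have hupos : ∀ x : ℝ, 0 < a + b * Real.exp (-(c * x)) := fun x => by positivity
  have hvpos : ∀ x : ℝ, 0 < a * Real.exp (c * x) + b := fun x => by positivity
  set K := (1 - Real.exp (-ρ)) * c with hK_def
  have hK0 : 0 < K := mul_pos (by linarith) hc0
  have hKb : K = b * c / lam := by rw [hK_def, hb_def]; field_simp
  set F : ℝ → ℝ := fun t => -(1/lam) * Real.log (a + b * Real.exp (-(c * t))) with hF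
  have hG' : ∀ x : ℝ, 1 - G x = K / (a * Real.exp (c * x) + b) := by
    intro x
    have hden : lam * Real.exp (-ρ) * (Real.exp (c * x) - 1) + lam
        = a * Real.exp (c * x) + b := by rw [ha_def, hb_def]; ring
    rw [hG x, hden]; ring
  have hderiv : ∀ x : ℝ, HasDerivAt F (K / (a * Real.exp (c * x) + b)) x := by
    intro x
    have h1 : HasDerivAt (fun t : ℝ => -(c * t)) (-c) x := by
      exact HasDerivAt.neg (by simpa using (hasDerivAt_id x).const_mul c)
    have h2 : HasDerivAt (fun t : ℝ => Real.exp (-(c * t)))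
        (Real.exp (-(c * x)) * (-c)) x := h1.exp
    have h3 : HasDerivAt (fun t : ℝ => a + b * Real.exp (-(c * t)))
        (b * (Real.exp (-(c * x)) * (-c))) x := (h2.const_mul b).const_add a
    have h4 := (h3.log (hupos x).ne').const_mul (-(1/lam))
    refine h4.congr_deriv ?_
    symm
    have key : Real.exp (c * x) * Real.exp (-(c * x)) = 1 := by
      rw [← Real.exp_add]; simp
    rw [hKb]
    field_simp
    linear_combination (-lam * rexp (-ρ)) * key
  have hint : IntegrableOn (fun x => K / (a * Real.exp (c * x) + b)) (Set.Ioi (0:ℝ)) := by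
    have hcont : Continuous fun x : ℝ => K / (a * Real.exp (c * x) + b) :=
      continuous_const.div (by continuity) (fun x => (hvpos x).ne')
    have hmono : IntegrableOn (fun x : ℝ => (K / a) * Real.exp (-(c * x))) (Set.Ioi (0:ℝ)) := by
      have := (exp_neg_integrableOn_Ioi (0:ℝ) hc0).const_mul (K / a)
      simpa [neg_mul, IntegrableOn] using this
    apply hmono.mono' hcont.aestronglyMeasurable
    filter_upwards with x
    have h1 : K / (a * Real.exp (c * x) + b) ≤ K / (a * Real.exp (c * x)) := by
      apply div_le_div_of_nonneg_left hK0.le (by positivity)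
      linarith [hb]
    have h2 : K / (a * Real.exp (c * x)) = (K / a) * Real.exp (-(c * x)) := by
      rw [Real.exp_neg]; field_simp
    rw [Real.norm_eq_abs, abs_of_pos (div_pos hK0 (hvpos x))]
    rw [h2] at h1; exact h1
  have hlim : Filter.Tendsto F Filter.atTop (nhds (-(1/lam) * Real.log a)) := by
    have h1 : Filter.Tendsto (fun t : ℝ => Real.exp (-(c * t))) Filter.atTop (nhds 0) :=
      Real.tendsto_exp_neg_atTop_nhds_zero.comp
        (Filter.Tendsto.const_mul_atTop hc0 Filter.tendsto_id)
    have h2 : Filter.Tendsto (fun t : ℝ => a + b * Real.exp (-(c * t))) Filter.atTop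
        (nhds (a + b * 0)) := tendsto_const_nhds.add (h1.const_mul b)
    rw [mul_zero, add_zero] at h2
    exact (((Real.continuousAt_log ha.ne').tendsto.comp h2).const_mul (-(1/lam)))
  have hcont0 : ContinuousWithinAt F (Set.Ici 0) 0 := (hderiv 0).continuousAt.continuousWithinAt
  have key := integral_Ioi_of_hasDerivAt_of_tendsto hcont0
    (fun x _ => hderiv x) hint hlim
  calc ∫ t in Set.Ioi (0:ℝ), (1 - G t)
      = ∫ t in Set.Ioi (0:ℝ), K / (a * Real.exp (c * t) + b) := by
        simp_rw [hG']
    _ = (-(1/lam) * Real.log a) - F 0 := key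
    _ = ρ / lam := by
        have hF0 : F 0 = -(1/lam) * Real.log lam := by
          simp [hF, hab]
        have hloga : Real.log a = Real.log lam - ρ := by
          rw [ha_def, Real.log_mul hlam.ne' (Real.exp_ne_zero _), Real.log_exp]; ring
        rw [hF0, hloga]; field_simp; ring
end

section
/- The cross-ratio identity: if G_i(t) = 1 - ((1 - e^{-ρ_i})·c)/(λ·e^{-ρ_i}·(e^{c·t} - 1) + λ) for i = 1,2,3,4 with the same c > 0 and λ > 0, and the ρ_i are distinct positive reals, then for all t > 0, ((G₄(t) - G₂(t))/(G₄(t) - G₁(t))) · ((G₃(t) - G₁(t))/(G₃(t) - G₂(t))) = ((e^{-ρ₄} - e^{-ρ₂})/(e^{-ρ₄} - e^{-ρ₁})) · ((e^{-ρ₃} - e^{-ρ₁})/(e^{-ρ₃} - e^{-ρ₂})). -/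
open Real

theorem stmt5 (lam c : ℝ) (hlam : 0 < lam) (hc : 0 < c)
    (ρ₁ ρ₂ ρ₃ ρ₄ : ℝ) (h1 : 0 < ρ₁) (h2 : 0 < ρ₂) (h3 : 0 < ρ₃) (h4 : 0 < ρ₄)
    (h12 : ρ₁ ≠ ρ₂) (h13 : ρ₁ ≠ ρ₃) (h14 : ρ₁ ≠ ρ₄)
    (h23 : ρ₂ ≠ ρ₃) (h24 : ρ₂ ≠ ρ₄) (h34 : ρ₃ ≠ ρ₄)
    (G : ℝ → ℝ → ℝ)
    (hG : ∀ ρ t, G ρ t = 1 - ((1 - exp (-ρ)) * c) / (lam * exp (-ρ) * (exp (c * t) - 1) + lam)) :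
    ∀ t > (0 : ℝ),
      ((G ρ₄ t - G ρ₂ t) / (G ρ₄ t - G ρ₁ t)) * ((G ρ₃ t - G ρ₁ t) / (G ρ₃ t - G ρ₂ t)) =
      ((exp (-ρ₄) - exp (-ρ₂)) / (exp (-ρ₄) - exp (-ρ₁))) *
        ((exp (-ρ₃) - exp (-ρ₁)) / (exp (-ρ₃) - exp (-ρ₂))) := by
  intro t ht
  set E := exp (c * t) with hE
  have hE1 : 1 < E := by
    rw [hE, ← Real.exp_zero]
    exact Real.exp_lt_exp.mpr (mul_pos hc ht)
  have hD : ∀ ρ : ℝ, 0 < lam * exp (-ρ) * (E - 1) + lam := fun ρ => by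
    have h := mul_pos (mul_pos hlam (exp_pos (-ρ))) (sub_pos.mpr hE1)
    linarith
  have hdiff : ∀ ρ σ : ℝ,
      G ρ t - G σ t = c * lam * E * (exp (-ρ) - exp (-σ)) /
        ((lam * exp (-ρ) * (E - 1) + lam) * (lam * exp (-σ) * (E - 1) + lam)) := by
    intro ρ σ
    rw [hG, hG, ← hE]
    have dρ := (hD ρ).ne'
    have dσ := (hD σ).ne'
    rw [eq_div_iff (mul_ne_zero dρ dσ)]
    linear_combination (-(lam * exp (-σ) * (E - 1) + lam)) * div_mul_cancel₀ ((1 - exp (-ρ)) * c) dρ + (lam * exp (-ρ) * (E - 1) + lam) * div_mul_cancel₀ ((1 - exp (-σ)) * c) dσ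
  have hne : ∀ ρ σ : ℝ, ρ ≠ σ → exp (-ρ) - exp (-σ) ≠ 0 := fun ρ σ h =>
    sub_ne_zero.mpr (fun he => h (neg_injective (Real.exp_injective he)))
  rw [hdiff, hdiff, hdiff, hdiff]
  have e42 := hne _ _ h24.symm
  have e41 := hne _ _ h14.symm
  have e31 := hne _ _ h13.symm
  have e32 := hne _ _ h23.symm
  have d1 := (hD ρ₁).ne'
  have d2 := (hD ρ₂).ne'
  have d3 := (hD ρ₃).ne'
  have d4 := (hD ρ₄).ne'
  have hK : c * lam * E ≠ 0 := by have := lt_trans zero_lt_one hE1; positivity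
  generalize c * lam * E = K at hK ⊢
  generalize lam * exp (-ρ₁) * (E - 1) + lam = D1 at d1 ⊢
  generalize lam * exp (-ρ₂) * (E - 1) + lam = D2 at d2 ⊢
  generalize lam * exp (-ρ₃) * (E - 1) + lam = D3 at d3 ⊢
  generalize lam * exp (-ρ₄) * (E - 1) + lam = D4 at d4 ⊢
  field_simp
end

section
/- Moment bounds: for n ≥ 1, the n-th moment E[T^n] = ∫₀^∞ t^n · g(t) dt of the distribution with density g(t) = ((1 - e^{-ρ})·e^{-ρ}·c²·e^{-c·t})/(λ·(e^{-ρ} + (1 - e^{-ρ})·e^{-c·t})²) satisfies ((1 - e^{-ρ})·e^{-ρ}/λ)·(n!/c^{n-1}) ≤ E[T^n] ≤ ((e^{ρ} - 1)/λ)·(n!/c^{n-1}). -/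
open Real MeasureTheory

lemma stmt8_integrable (c : ℝ) (hc : 0 < c) (n : ℕ) :
    IntegrableOn (fun t : ℝ => t ^ n * exp (-(c * t))) (Set.Ioi 0) := by
  have h := integrableOn_rpow_mul_exp_neg_mul_rpow (p := 1) (s := (n : ℝ)) (b := c)
    (by exact_mod_cast neg_one_lt_zero.trans_le (Nat.cast_nonneg n)) zero_lt_one hc
  refine h.congr_fun (fun x hx => ?_) measurableSet_Ioi
  dsimp only
  rw [Real.rpow_one, Real.rpow_natCast, neg_mul]

lemma stmt8_integral (c : ℝ) (hc : 0 < c) (n : ℕ) :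
    ∫ t in Set.Ioi (0 : ℝ), t ^ n * exp (-(c * t)) = (Nat.factorial n : ℝ) / c ^ (n + 1) := by
  have h := integral_rpow_mul_exp_neg_mul_Ioi (a := (n : ℝ) + 1) (r := c)
    (by positivity) hc
  rw [show ((n : ℝ) + 1 - 1) = (n : ℝ) by ring] at h
  rw [setIntegral_congr_fun measurableSet_Ioi
    (fun x (hx : 0 < x) => by rw [← Real.rpow_natCast x n]), h,
    Real.Gamma_nat_eq_factorial,
    show ((n : ℝ) + 1) = ((n + 1 : ℕ) : ℝ) by push_cast; ring,
    Real.rpow_natCast, div_pow, one_pow]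
  field_simp

theorem stmt8 (lam ρ c : ℝ) (hlam : 0 < lam) (hρ : 0 < ρ) (hc : 0 < c)
    (g : ℝ → ℝ)
    (hg : ∀ t, g t = ((1 - exp (-ρ)) * exp (-ρ) * c ^ 2 * exp (-(c * t))) /
        (lam * (exp (-ρ) + (1 - exp (-ρ)) * exp (-(c * t))) ^ 2))
    (n : ℕ) (hn : 1 ≤ n) :
    ((1 - exp (-ρ)) * exp (-ρ) / lam) * ((Nat.factorial n : ℝ) / c ^ (n - 1)) ≤
        ∫ t in Set.Ioi (0 : ℝ), t ^ n * g t ∧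
      ∫ t in Set.Ioi (0 : ℝ), t ^ n * g t ≤
        ((exp ρ - 1) / lam) * ((Nat.factorial n : ℝ) / c ^ (n - 1)) := by
  set a : ℝ := exp (-ρ) with ha
  have ha0 : 0 < a := exp_pos _
  have ha1 : a < 1 := by
    rw [ha, exp_lt_one_iff]; linarith
  have hexp : a * exp ρ = 1 := by rw [ha, ← exp_add]; simp
  set A : ℝ := (1 - a) * a * c ^ 2 / lam with hA
  set B : ℝ := (exp ρ - 1) * c ^ 2 / lam with hB
  have hA0 : 0 < A := div_pos (mul_pos (mul_pos (by linarith) ha0) (by positivity)) hlam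
  have hexp1 : 1 < exp ρ := by nlinarith
  have hB0 : 0 < B := div_pos (mul_pos (by linarith) (by positivity)) hlam
  -- pointwise bounds on Ioi 0
  have hbound : ∀ t ∈ Set.Ioi (0 : ℝ),
      A * (t ^ n * exp (-(c * t))) ≤ t ^ n * g t ∧
      t ^ n * g t ≤ B * (t ^ n * exp (-(c * t))) := by
    intro t ht
    have ht0 : (0 : ℝ) < t := ht
    have he : exp (-(c * t)) ≤ 1 := by
      rw [exp_le_one_iff]; nlinarith
    have he0 : 0 < exp (-(c * t)) := exp_pos _
    set D : ℝ := a + (1 - a) * exp (-(c * t)) with hD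
    have hDa : a ≤ D := by nlinarith
    have hD1 : D ≤ 1 := by nlinarith
    have hD0 : 0 < D := lt_of_lt_of_le ha0 hDa
    have hgt : g t = (1 - a) * a * c ^ 2 * exp (-(c * t)) / (lam * D ^ 2) := by
      rw [hg t]
    have htn : 0 < t ^ n := pow_pos ht0 n
    have hNum : 0 ≤ (1 - a) * a * c ^ 2 * exp (-(c * t)) := by
      have : (0:ℝ) < 1 - a := by linarith
      positivity
    constructor
    · rw [hgt]
      have key : (1 - a) * a * c ^ 2 * exp (-(c * t)) / (lam * 1 ^ 2) ≤
          (1 - a) * a * c ^ 2 * exp (-(c * t)) / (lam * D ^ 2) := by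
        gcongr
      calc A * (t ^ n * exp (-(c * t)))
          = t ^ n * ((1 - a) * a * c ^ 2 * exp (-(c * t)) / (lam * 1 ^ 2)) := by
            rw [hA]; ring
        _ ≤ t ^ n * ((1 - a) * a * c ^ 2 * exp (-(c * t)) / (lam * D ^ 2)) :=
            mul_le_mul_of_nonneg_left key htn.le
    · rw [hgt]
      have hBe : (1 - a) * a * c ^ 2 * exp (-(c * t)) / (lam * a ^ 2) =
          B * exp (-(c * t)) := by
        have hsub : exp ρ - 1 = (1 - a) / a := by
          rw [eq_div_iff (ne_of_gt ha0)]
          linear_combination hexp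
        rw [hB, hsub]
        field_simp
      have key : (1 - a) * a * c ^ 2 * exp (-(c * t)) / (lam * D ^ 2) ≤
          (1 - a) * a * c ^ 2 * exp (-(c * t)) / (lam * a ^ 2) := by
        gcongr
      calc t ^ n * ((1 - a) * a * c ^ 2 * exp (-(c * t)) / (lam * D ^ 2))
          ≤ t ^ n * ((1 - a) * a * c ^ 2 * exp (-(c * t)) / (lam * a ^ 2)) :=
            mul_le_mul_of_nonneg_left key htn.le
        _ = B * (t ^ n * exp (-(c * t))) := by rw [hBe]; ring
  -- integrability
  have hKint : IntegrableOn (fun t : ℝ => t ^ n * exp (-(c * t))) (Set.Ioi 0) :=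
    stmt8_integrable c hc n
  have hmeas : AEStronglyMeasurable (fun t : ℝ => t ^ n * g t)
      (volume.restrict (Set.Ioi 0)) := by
    have heq : (fun t : ℝ => t ^ n * g t) = fun t : ℝ =>
        t ^ n * (((1 - a) * a * c ^ 2 * exp (-(c * t))) /
          (lam * (a + (1 - a) * exp (-(c * t))) ^ 2)) := by
      funext t; rw [hg t]
    rw [heq]
    apply Continuous.aestronglyMeasurable
    apply Continuous.mul (continuous_pow n)
    apply Continuous.div (by fun_prop) (by fun_prop)
    intro t
    have he0 : 0 < exp (-(c * t)) := exp_pos _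
    have hDpos : 0 < a + (1 - a) * exp (-(c * t)) := by nlinarith
    exact ne_of_gt (mul_pos hlam (pow_pos hDpos 2))
  have hgint : IntegrableOn (fun t : ℝ => t ^ n * g t) (Set.Ioi 0) := by
    apply Integrable.mono' (hKint.const_mul B) hmeas
    filter_upwards [ae_restrict_mem measurableSet_Ioi] with t ht
    have h := hbound t ht
    have h1 : 0 ≤ t ^ n * g t :=
      le_trans (mul_nonneg hA0.le (by have ht0 : (0:ℝ) < t := ht; positivity)) h.1
    rw [Real.norm_eq_abs, abs_of_nonneg h1]
    exact h.2
  -- integral comparison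
  have hlow : ∫ t in Set.Ioi (0 : ℝ), A * (t ^ n * exp (-(c * t))) ≤
      ∫ t in Set.Ioi (0 : ℝ), t ^ n * g t :=
    setIntegral_mono_on (hKint.const_mul A) hgint measurableSet_Ioi
      (fun t ht => (hbound t ht).1)
  have hhigh : ∫ t in Set.Ioi (0 : ℝ), t ^ n * g t ≤
      ∫ t in Set.Ioi (0 : ℝ), B * (t ^ n * exp (-(c * t))) :=
    setIntegral_mono_on hgint (hKint.const_mul B) measurableSet_Ioi
      (fun t ht => (hbound t ht).2)
  rw [integral_const_mul, stmt8_integral c hc n] at hlow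
  rw [integral_const_mul, stmt8_integral c hc n] at hhigh
  obtain ⟨m, rfl⟩ : ∃ m, n = m + 1 := ⟨n - 1, (Nat.succ_pred_eq_of_pos hn).symm⟩
  have hpow : c ^ (m + 1 + 1) = c ^ (m + 1 - 1) * c ^ 2 := by
    rw [Nat.add_sub_cancel, ← pow_add]
  have hcm : (0:ℝ) < c ^ (m + 1 - 1) := pow_pos hc _
  constructor
  · refine le_trans (le_of_eq ?_) hlow
    rw [hA, hpow]
    field_simp
  · refine le_trans hhigh (le_of_eq ?_)
    rw [hB, hpow]
    field_simp
end
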